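/- Let I1 and I2 be two MM instances with the same students, schools, preference lists and priority orders, whose capacity functions q1 and q2 satisfy q1(w) ≤ q2(w) for every school w, and let μ1 and μ2 be their student-optimal stable matchings. If a school w is under-filled in μ1, i.e., |μ1⁻¹(w)| < q1(w), then μ2⁻¹(w) ⊆ μ1⁻¹(w). -/

import Mathlib

/-!
Basic framework for many-to-one matching (MM) instances with two-sided
preferences, following the paper "Optimal Capacity Modification for
Many-to-One Matching Problems".

Preference/priority orders are encoded by rank functions (`rkS`, `rkW`):
a smaller rank means more preferred; ranks are required to be injective
on the respective sets of acceptable partners.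
-/

structure MM (U W : Type*) [Fintype U] [Fintype W] [DecidableEq U] [DecidableEq W] where
  /-- acceptable schools of a student -/
  accS : U → Finset W
  /-- students on a school's priority list -/
  accW : W → Finset U
  /-- every student has a nonempty preference list -/
  acc_ne : ∀ u, (accS u).Nonempty
  /-- mutual acceptability -/
  acc_iff : ∀ u w, u ∈ accW w ↔ w ∈ accS u
  /-- rank of a school in a student's list (smaller = better) -/
  rkS : U → W → ℕ
  /-- rank of a student in a school's priority list (smaller = better) -/
  rkW : W → U → ℕ
  rkS_inj : ∀ u, ∀ w1 ∈ accS u, ∀ w2 ∈ accS u, rkS u w1 = rkS u w2 → w1 = w2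
  rkW_inj : ∀ w, ∀ u1 ∈ accW w, ∀ u2 ∈ accW w, rkW w u1 = rkW w u2 → u1 = u2
  /-- capacities -/
  q : W → ℕ
  q_pos : ∀ w, 1 ≤ q w

namespace MM

variable {U W : Type*} [Fintype U] [Fintype W] [DecidableEq U] [DecidableEq W]

/-- `μ` is a (partial) matching: it assigns only acceptable schools. -/
def IsMatching (I : MM U W) (μ : U → Option W) : Prop :=
  ∀ u w, μ u = some w → w ∈ I.accS u

/-- the set of students assigned to school `w` -/
def assignedTo (μ : U → Option W) (w : W) : Set U := {u | μ u = some w}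

/-- the number of students assigned to school `w` -/
noncomputable def load (μ : U → Option W) (w : W) : ℕ := (assignedTo μ w).ncard

/-- `μ` is feasible: it is a matching respecting all capacities. -/
def Feasible (I : MM U W) (μ : U → Option W) : Prop :=
  I.IsMatching μ ∧ ∀ w, load μ w ≤ I.q w

/-- `μ` is perfect: every student is matched. -/
def Perfect (μ : U → Option W) : Prop := ∀ u, μ u ≠ none

/-- student `u` strictly prefers school `w` to the outcome `o`
(where `o = none` means being unmatched) -/
def PrefOut (I : MM U W) (u : U) (w : W) (o : Option W) : Prop :=
  o = none ∨ ∃ w', o = some w' ∧ I.rkS u w < I.rkS u w'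

/-- `(u,w)` is a blocking pair of `μ` -/
def Blocks (I : MM U W) (μ : U → Option W) (u : U) (w : W) : Prop :=
  u ∈ I.accW w ∧ I.PrefOut u w (μ u) ∧
    (load μ w < I.q w ∨ ∃ u' ∈ assignedTo μ w, I.rkW w u < I.rkW w u')

/-- `μ` is stable: feasible and with no blocking pair -/
def Stable (I : MM U W) (μ : U → Option W) : Prop :=
  I.Feasible μ ∧ ∀ u w, ¬ I.Blocks μ u w

/-- student `u` is strictly better off under `μ` than under `σ` -/
def Better (I : MM U W) (u : U) (μ σ : U → Option W) : Prop :=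
  ∃ w, μ u = some w ∧ I.PrefOut u w (σ u)

/-- student `u` weakly prefers `μ` to `σ` -/
def WeakPref (I : MM U W) (u : U) (μ σ : U → Option W) : Prop :=
  μ u = σ u ∨ I.Better u μ σ

/-- `μ` dominates `σ` -/
def Dominates (I : MM U W) (μ σ : U → Option W) : Prop :=
  (∀ u, I.WeakPref u μ σ) ∧ ∃ u, I.Better u μ σ

/-- `μ` is (Pareto-)efficient: feasible and dominated by no feasible matching -/
def Efficient (I : MM U W) (μ : U → Option W) : Prop :=
  I.Feasible μ ∧ ∀ σ, I.Feasible σ → ¬ I.Dominates σ μ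

/-- `μ` is a student-optimal stable matching -/
def StudentOptimal (I : MM U W) (μ : U → Option W) : Prop :=
  I.Stable μ ∧ ∀ σ, I.Stable σ → ∀ u, I.WeakPref u μ σ

/-- increase capacities by the vector `r` -/
def incCap (I : MM U W) (r : W → ℕ) : MM U W :=
  { I with
    q := fun w => I.q w + r w
    q_pos := fun w => le_trans (I.q_pos w) (Nat.le_add_right _ _) }

/-- replace the capacities by `q'` -/
def withCap (I : MM U W) (q' : W → ℕ) (hq' : ∀ w, 1 ≤ q' w) : MM U W :=
  { I with
    q := q'
    q_pos := hq' }

/-- student `x` justifiedly envies student `y` under `σ` -/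
def JEnvy (I : MM U W) (σ : U → Option W) (x y : U) : Prop :=
  ∃ w, σ y = some w ∧ x ∈ I.accW w ∧ I.rkW w x < I.rkW w y ∧ I.PrefOut x w (σ x)

/-- the set of students unmatched under `μ` -/
def unmatchedSet (μ : U → Option W) : Set U := {u | μ u = none}

/-- `v` is an assignment vector: it assigns to each student unmatched
under `μhat` an acceptable school -/
def IsAsgVec (I : MM U W) (μhat : U → Option W) (v : U → W) : Prop :=
  ∀ u, μhat u = none → v u ∈ I.accS u

/-- `μhat + v` : additionally match every unmatched student `u` to `v u` -/
def extend (μhat : U → Option W) (v : U → W) : U → Option W :=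
  fun u => some ((μhat u).getD (v u))

/-- JE(v): the assigned students who justifiedly envy some unassigned student
under `μhat + v` -/
def JEset (I : MM U W) (μhat : U → Option W) (v : U → W) : Set U :=
  {x | μhat x ≠ none ∧ ∃ y, μhat y = none ∧ I.JEnvy (extend μhat v) x y}

/-- `n_je(v)` -/
noncomputable def nje (I : MM U W) (μhat : U → Option W) (v : U → W) : ℕ :=
  (I.JEset μhat v).ncard

end MM

/-- Lemma 2.4 (ii): if a school is under-filled in the
student-optimal stable matching of the smaller-capacity instance, then after a
capacity increase it only keeps (a subset of) its previously assigned students. -/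
theorem statement_1 {U W : Type*} [Fintype U] [Fintype W] [DecidableEq U] [DecidableEq W]
    (I1 I2 : MM U W)
    (haccS : I1.accS = I2.accS) (haccW : I1.accW = I2.accW)
    (hrkS : I1.rkS = I2.rkS) (hrkW : I1.rkW = I2.rkW)
    (hq : ∀ w, I1.q w ≤ I2.q w)
    (μ1 μ2 : U → Option W)
    (h1 : I1.StudentOptimal μ1) (h2 : I2.StudentOptimal μ2) :
    ∀ w, MM.load μ1 w < I1.q w → MM.assignedTo μ2 w ⊆ MM.assignedTo μ1 w := by
  classical
  -- unpack stability
  obtain ⟨⟨⟨m1, f1⟩, nb1⟩, -⟩ := h1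
  obtain ⟨⟨⟨m2, f2⟩, nb2⟩, -⟩ := h2
  intro w0 hw0 u hu0
  by_contra hu1
  simp only [MM.assignedTo, Set.mem_setOf_eq] at hu0 hu1
  -- basic helper facts
  have hBetter_prefout : ∀ x wx, μ1 x = some wx → I1.Better x μ1 μ2 →
      I1.PrefOut x wx (μ2 x) := by
    rintro x wx hx ⟨w', hw', hp⟩
    rw [hx] at hw'
    cases Option.some.inj hw'
    exact hp
  have hPrefOut_ne : ∀ x wx, I1.PrefOut x wx (μ2 x) → μ2 x ≠ some wx := by
    rintro x wx (h | ⟨w', he, hlt⟩) hc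
    · rw [hc] at h; exact Option.some_ne_none _ h
    · rw [hc] at he
      cases Option.some.inj he
      exact lt_irrefl _ hlt
  -- L1: non-blocking of μ2 for a student preferring wx to μ2
  have hfull : ∀ x wx, μ1 x = some wx → I1.PrefOut x wx (μ2 x) →
      MM.load μ2 wx = I2.q wx ∧ ∀ y, μ2 y = some wx → I1.rkW wx y < I1.rkW wx x := by
    intro x wx hx hp
    have haccx1 : wx ∈ I1.accS x := m1 x wx hx
    have hacc : x ∈ I2.accW wx := by
      rw [← haccW]; exact (I1.acc_iff x wx).2 haccx1
    have hp2 : I2.PrefOut x wx (μ2 x) := by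
      unfold MM.PrefOut at hp ⊢; rw [← hrkS]; exact hp
    have hnb := nb2 x wx
    unfold MM.Blocks at hnb
    push_neg at hnb
    have h3 := hnb hacc hp2
    obtain ⟨h3a, h3b⟩ := h3
    refine ⟨le_antisymm (f2 wx) h3a, ?_⟩
    intro y hy
    have hyacc : y ∈ I1.accW wx := by
      refine (I1.acc_iff y wx).2 ?_
      rw [haccS]; exact m2 y wx hy
    have hxacc : x ∈ I1.accW wx := (I1.acc_iff x wx).2 haccx1
    have hyle : I2.rkW wx y ≤ I2.rkW wx x := h3b y hy
    have hne : y ≠ x := by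
      intro he; exact hPrefOut_ne x wx hp (he ▸ hy)
    have hnrk : I1.rkW wx y ≠ I1.rkW wx x := fun he =>
      hne (I1.rkW_inj wx y hyacc x hxacc he)
    rw [hrkW] at hnrk
    rw [hrkW]
    exact lt_of_le_of_ne hyle hnrk
  -- L2: a student assigned by μ2 to w but not by μ1, not better off under μ1,
  -- prefers w to his μ1-outcome
  have hnotT : ∀ y wy, μ2 y = some wy → μ1 y ≠ some wy → ¬ I1.Better y μ1 μ2 →
      I1.PrefOut y wy (μ1 y) := by
    intro y wy h2y h1y hb
    cases hm : μ1 y with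
    | none => exact Or.inl rfl
    | some w2 =>
      refine Or.inr ⟨w2, rfl, ?_⟩
      have hnp : ¬ I1.PrefOut y w2 (μ2 y) := fun hp => hb ⟨w2, hm, hp⟩
      rw [h2y] at hnp
      have hle : I1.rkS y wy ≤ I1.rkS y w2 := by
        by_contra hlt
        push_neg at hlt
        exact hnp (Or.inr ⟨wy, rfl, hlt⟩)
      have hne : wy ≠ w2 := by
        intro he; rw [← he] at hm; exact h1y hm
      have hacc1 : wy ∈ I1.accS y := by rw [haccS]; exact m2 y wy h2y
      have hacc2 : w2 ∈ I1.accS y := m1 y w2 hm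
      exact lt_of_le_of_ne hle fun he =>
        hne (I1.rkS_inj y wy hacc1 w2 hacc2 he)
  have haccW1 : ∀ y wy, μ2 y = some wy → y ∈ I1.accW wy := by
    intro y wy hy
    refine (I1.acc_iff y wy).2 ?_
    rw [haccS]; exact m2 y wy hy
  -- everyone entering the under-filled school w0 must be better off under μ1
  have hDsub0 : ∀ y, μ2 y = some w0 → μ1 y ≠ some w0 → I1.Better y μ1 μ2 := by
    intro y hy2 hy1
    by_contra hb
    exact nb1 y w0 ⟨haccW1 y w0 hy2, hnotT y w0 hy2 hy1 hb, Or.inl hw0⟩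
  -- same for any school that some better-off student left (w.r.t. μ2)
  have hDsubA : ∀ w x, μ1 x = some w → I1.Better x μ1 μ2 →
      ∀ y, μ2 y = some w → μ1 y ≠ some w → I1.Better y μ1 μ2 := by
    intro w x hx hbx y hy2 hy1
    by_contra hb
    have hlt := (hfull x w hx (hBetter_prefout x w hx hbx)).2 y hy2
    exact nb1 y w ⟨haccW1 y w hy2, hnotT y w hy2 hy1 hb, Or.inr ⟨x, hx, hlt⟩⟩
  -- Finset bookkeeping
  set M1 : W → Finset U := fun w => Finset.univ.filter (fun x => μ1 x = some w) with hM1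
  set M2 : W → Finset U := fun w => Finset.univ.filter (fun x => μ2 x = some w) with hM2
  set Ef : W → Finset U := fun w =>
    Finset.univ.filter (fun x => μ1 x = some w ∧ I1.Better x μ1 μ2) with hEf
  set Df : W → Finset U := fun w =>
    Finset.univ.filter (fun y => μ2 y = some w ∧ μ1 y ≠ some w ∧ I1.Better y μ1 μ2) with hDf
  set Tf : Finset U := Finset.univ.filter (fun x => I1.Better x μ1 μ2) with hTf
  have hload : ∀ (μ : U → Option W) w,
      MM.load μ w = (Finset.univ.filter (fun x => μ x = some w)).card := by
    intro μ w
    rw [MM.load, MM.assignedTo,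
      show {u | μ u = some w}
          = ((Finset.univ.filter (fun x => μ x = some w) : Finset U) : Set U) from by
        ext z; simp,
      Set.ncard_coe_finset]
  have hEsub : ∀ w, Ef w ⊆ M1 w \ M2 w := by
    intro w x hx
    simp only [hEf, Finset.mem_filter, Finset.mem_univ, true_and] at hx
    obtain ⟨hx1, hbx⟩ := hx
    simp only [hM1, hM2, Finset.mem_sdiff, Finset.mem_filter, Finset.mem_univ, true_and]
    exact ⟨hx1, hPrefOut_ne x w (hBetter_prefout x w hx1 hbx)⟩
  have hDfeq : ∀ w, (∀ y, μ2 y = some w → μ1 y ≠ some w → I1.Better y μ1 μ2) →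
      Df w = M2 w \ M1 w := by
    intro w hsub
    ext y
    simp only [hDf, hM1, hM2, Finset.mem_sdiff, Finset.mem_filter, Finset.mem_univ, true_and]
    constructor
    · rintro ⟨a, b, -⟩; exact ⟨a, b⟩
    · rintro ⟨a, b⟩; exact ⟨a, b, hsub y a b⟩
  -- the per-school cardinality comparison
  have hmain : ∀ w, (Ef w).card ≤ (Df w).card := by
    intro w
    by_cases hA : ∃ x, μ1 x = some w ∧ I1.Better x μ1 μ2
    · obtain ⟨x, hx, hbx⟩ := hA
      have hq2 : (M2 w).card = I2.q w := by
        rw [hM2, ← hload]; exact (hfull x w hx (hBetter_prefout x w hx hbx)).1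
      have hl1 : (M1 w).card ≤ I1.q w := by rw [hM1, ← hload]; exact f1 w
      have c1 := Finset.card_sdiff_add_card_inter (M2 w) (M1 w)
      have c2 := Finset.card_sdiff_add_card_inter (M1 w) (M2 w)
      have hic : (M2 w ∩ M1 w).card = (M1 w ∩ M2 w).card := by rw [Finset.inter_comm]
      have hEc : (Ef w).card ≤ (M1 w \ M2 w).card := Finset.card_le_card (hEsub w)
      have hqq := hq w
      rw [hDfeq w (hDsubA w x hx hbx)]
      omega
    · have he : Ef w = ∅ := by
        rw [hEf]
        ext x
        simp only [Finset.mem_filter, Finset.mem_univ, true_and, Finset.notMem_empty,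
          iff_false]
        rintro ⟨a, b⟩
        exact hA ⟨x, a, b⟩
      simp [he]
  -- strict comparison at the under-filled school
  have hstrict : (Ef w0).card < (Df w0).card := by
    rw [hDfeq w0 hDsub0]
    by_cases hA : ∃ x, μ1 x = some w0 ∧ I1.Better x μ1 μ2
    · obtain ⟨x, hx, hbx⟩ := hA
      have hq2 : (M2 w0).card = I2.q w0 := by
        rw [hM2, ← hload]; exact (hfull x w0 hx (hBetter_prefout x w0 hx hbx)).1
      have hl1 : (M1 w0).card < I1.q w0 := by rw [hM1, ← hload]; exact hw0
      have c1 := Finset.card_sdiff_add_card_inter (M2 w0) (M1 w0)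
      have c2 := Finset.card_sdiff_add_card_inter (M1 w0) (M2 w0)
      have hic : (M2 w0 ∩ M1 w0).card = (M1 w0 ∩ M2 w0).card := by rw [Finset.inter_comm]
      have hEc : (Ef w0).card ≤ (M1 w0 \ M2 w0).card := Finset.card_le_card (hEsub w0)
      have hqq := hq w0
      omega
    · have he : Ef w0 = ∅ := by
        rw [hEf]
        ext x
        simp only [Finset.mem_filter, Finset.mem_univ, true_and, Finset.notMem_empty,
          iff_false]
        rintro ⟨a, b⟩
        exact hA ⟨x, a, b⟩
      have hu : u ∈ M2 w0 \ M1 w0 := by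
        simp only [hM1, hM2, Finset.mem_sdiff, Finset.mem_filter, Finset.mem_univ, true_and]
        exact ⟨hu0, hu1⟩
      rw [he]
      simpa using Finset.card_pos.2 ⟨u, hu⟩
  -- sum of Ef-cards equals |T|
  have hsum1 : Tf.card = ∑ w, (Ef w).card := by
    have hfib : ∀ x ∈ Tf, (μ1 x).getD w0 ∈ (Finset.univ : Finset W) := fun x _ =>
      Finset.mem_univ _
    rw [Finset.card_eq_sum_card_fiberwise hfib]
    refine Finset.sum_congr rfl fun b _ => ?_
    congr 1
    ext x
    simp only [hTf, hEf, Finset.mem_filter, Finset.mem_univ, true_and]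
    constructor
    · rintro ⟨hb, hgd⟩
      obtain ⟨w', hw', -⟩ := id hb
      rw [hw'] at hgd
      simp only [Option.getD_some] at hgd
      rw [hgd] at hw'
      exact ⟨hw', hb⟩
    · rintro ⟨hm, hb⟩
      refine ⟨hb, ?_⟩
      rw [hm]
      rfl
  -- sum of Df-cards is at most |T|
  have hsum2 : ∑ w, (Df w).card ≤ Tf.card := by
    have hdisj : ∀ w ∈ (Finset.univ : Finset W), ∀ w' ∈ (Finset.univ : Finset W),
        w ≠ w' → Disjoint (Df w) (Df w') := by
      intro w _ w' _ hne
      refine Finset.disjoint_left.2 fun y hy hy' => hne ?_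
      simp only [hDf, Finset.mem_filter, Finset.mem_univ, true_and] at hy hy'
      have := hy.1.symm.trans hy'.1
      exact Option.some.inj this
    rw [← Finset.card_biUnion hdisj]
    refine Finset.card_le_card fun y hy => ?_
    simp only [Finset.mem_biUnion] at hy
    obtain ⟨w, -, hy⟩ := hy
    simp only [hDf, Finset.mem_filter, Finset.mem_univ, true_and] at hy
    simp only [hTf, Finset.mem_filter, Finset.mem_univ, true_and]
    exact hy.2.2
  have hlt : ∑ w, (Ef w).card < ∑ w, (Df w).card :=
    Finset.sum_lt_sum (fun w _ => hmain w) ⟨w0, Finset.mem_univ _, hstrict⟩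
  omega
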